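/- Let K and O be knowledge bases and α a general concept inclusion such that: (1) K and α are formulated in SROIQ(D) without the universal role, where D is the concrete domain of integer intervals; (2) the terminological part of O enjoys the disjoint model union property; (3) the terminological part of K is local with respect to sig(O); and (4) (sig(K) ∪ sig(α)) ∩ sig(O) contains only concept names. Then K ∪ O ⊨ α if and only if K ∪ pos(O) ⊨ α. -/

import Mathlib

/-! Core formalization of SROIQ(D) without the universal role,
    with the concrete domain of integer intervals. -/

namespace SROIQPaper

/-- Role expressions: role names and inverse roles. -/
inductive Rl : Type
  | name : ℕ → Rl
  | inv  : ℕ → Rl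
  deriving DecidableEq

/-- SROIQ(D) concepts without the universal role; the concrete domain is
    that of integer intervals (`∃f.[l,u]`). -/
inductive Cpt : Type
  | atom : ℕ → Cpt
  | top : Cpt
  | bot : Cpt
  | nom : ℕ → Cpt                    -- nominal {a}
  | neg : Cpt → Cpt
  | and : Cpt → Cpt → Cpt
  | or : Cpt → Cpt → Cpt
  | ex : Rl → Cpt → Cpt
  | all : Rl → Cpt → Cpt
  | atLeast : ℕ → Rl → Cpt → Cpt
  | atMost : ℕ → Rl → Cpt → Cpt
  | selfC : Rl → Cpt
  | ival : ℕ → ℤ → ℤ → Cpt           -- ∃f.[l,u]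
  deriving DecidableEq

/-- SROIQ(D) axioms: GCIs, role disjointness, complex role inclusions
    (terminological axioms), and concept/role assertions (ABox axioms). -/
inductive Ax : Type
  | gci : Cpt → Cpt → Ax
  | rdisj : Rl → Rl → Ax
  | rincl : List Rl → Rl → Ax
  | cassert : Cpt → ℕ → Ax
  | rassert : Rl → ℕ → ℕ → Ax
  deriving DecidableEq

/-- An interpretation: concept names, role names, concrete properties,
    individual names. -/
structure Interp : Type 1 where
  Δ : Type
  nonempty : Nonempty Δ
  conc : ℕ → Set Δ
  role : ℕ → Set (Δ × Δ)
  cprop : ℕ → Set (Δ × ℤ)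
  ind : ℕ → Δ

def Rl.sem (I : Interp) : Rl → Set (I.Δ × I.Δ)
  | .name r => I.role r
  | .inv r => {p | (p.2, p.1) ∈ I.role r}

def Cpt.sem (I : Interp) : Cpt → Set I.Δ
  | .atom a => I.conc a
  | .top => Set.univ
  | .bot => ∅
  | .nom a => {I.ind a}
  | .neg c => (c.sem I)ᶜ
  | .and c d => c.sem I ∩ d.sem I
  | .or c d => c.sem I ∪ d.sem I
  | .ex r c => {x | ∃ y, (x, y) ∈ r.sem I ∧ y ∈ c.sem I}
  | .all r c => {x | ∀ y, (x, y) ∈ r.sem I → y ∈ c.sem I}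
  | .atLeast n r c => {x | ∃ t : Finset I.Δ, n ≤ t.card ∧ ∀ y ∈ t, (x, y) ∈ r.sem I ∧ y ∈ c.sem I}
  | .atMost n r c =>
      {x | {y | (x, y) ∈ r.sem I ∧ y ∈ c.sem I}.Finite ∧
           {y | (x, y) ∈ r.sem I ∧ y ∈ c.sem I}.ncard ≤ n}
  | .selfC r => {x | (x, x) ∈ r.sem I}
  | .ival f l u => {x | ∃ i : ℤ, l ≤ i ∧ i ≤ u ∧ (x, i) ∈ I.cprop f}

def chain (I : Interp) : List Rl → Set (I.Δ × I.Δ)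
  | [] => {p | p.1 = p.2}
  | r :: rest => {p | ∃ z, (p.1, z) ∈ r.sem I ∧ (z, p.2) ∈ chain I rest}

def Interp.satAx (I : Interp) : Ax → Prop
  | .gci c d => c.sem I ⊆ d.sem I
  | .rdisj r s => r.sem I ∩ s.sem I = ∅
  | .rincl rs r => chain I rs ⊆ r.sem I
  | .cassert c a => I.ind a ∈ c.sem I
  | .rassert r a b => (I.ind a, I.ind b) ∈ r.sem I

def Interp.sat (I : Interp) (K : Set Ax) : Prop := ∀ ax ∈ K, I.satAx ax

/-- Terminological axioms. -/
def isTerm : Ax → Prop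
  | .gci _ _ => True
  | .rdisj _ _ => True
  | .rincl _ _ => True
  | _ => False

/-- The terminological part (TBox) of a knowledge base. -/
def termPart (K : Set Ax) : Set Ax := {ax | ax ∈ K ∧ isTerm ax}

/-- The ABox of a knowledge base. -/
def abox (K : Set Ax) : Set Ax := {ax | ax ∈ K ∧ ¬ isTerm ax}

/-! ### Signatures -/

def Rl.base : Rl → ℕ
  | .name r => r
  | .inv r => r

def Cpt.cNames : Cpt → Set ℕ
  | .atom a => {a}
  | .neg c => c.cNames
  | .and c d => c.cNames ∪ d.cNames
  | .or c d => c.cNames ∪ d.cNames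
  | .ex _ c => c.cNames
  | .all _ c => c.cNames
  | .atLeast _ _ c => c.cNames
  | .atMost _ _ c => c.cNames
  | _ => ∅

def Cpt.rNames : Cpt → Set ℕ
  | .neg c => c.rNames
  | .and c d => c.rNames ∪ d.rNames
  | .or c d => c.rNames ∪ d.rNames
  | .ex r c => insert r.base c.rNames
  | .all r c => insert r.base c.rNames
  | .atLeast _ r c => insert r.base c.rNames
  | .atMost _ r c => insert r.base c.rNames
  | .selfC r => {r.base}
  | _ => ∅

def Cpt.fNames : Cpt → Set ℕ
  | .neg c => c.fNames
  | .and c d => c.fNames ∪ d.fNames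
  | .or c d => c.fNames ∪ d.fNames
  | .ex _ c => c.fNames
  | .all _ c => c.fNames
  | .atLeast _ _ c => c.fNames
  | .atMost _ _ c => c.fNames
  | .ival f _ _ => {f}
  | _ => ∅

def Cpt.iNames : Cpt → Set ℕ
  | .nom a => {a}
  | .neg c => c.iNames
  | .and c d => c.iNames ∪ d.iNames
  | .or c d => c.iNames ∪ d.iNames
  | .ex _ c => c.iNames
  | .all _ c => c.iNames
  | .atLeast _ _ c => c.iNames
  | .atMost _ _ c => c.iNames
  | _ => ∅

def Ax.cNames : Ax → Set ℕ
  | .gci c d => c.cNames ∪ d.cNames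
  | .cassert c _ => c.cNames
  | _ => ∅

def Ax.rNames : Ax → Set ℕ
  | .gci c d => c.rNames ∪ d.rNames
  | .rdisj r s => {r.base, s.base}
  | .rincl rs r => insert r.base {n | ∃ s ∈ rs, n = Rl.base s}
  | .cassert c _ => c.rNames
  | .rassert r _ _ => {r.base}

def Ax.fNames : Ax → Set ℕ
  | .gci c d => c.fNames ∪ d.fNames
  | .cassert c _ => c.fNames
  | _ => ∅

def Ax.iNames : Ax → Set ℕ
  | .gci c d => c.iNames ∪ d.iNames
  | .cassert c a => insert a c.iNames
  | .rassert _ a b => {a, b}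
  | _ => ∅

def sigC (K : Set Ax) : Set ℕ := {n | ∃ ax ∈ K, n ∈ Ax.cNames ax}
def sigR (K : Set Ax) : Set ℕ := {n | ∃ ax ∈ K, n ∈ Ax.rNames ax}
def sigF (K : Set Ax) : Set ℕ := {n | ∃ ax ∈ K, n ∈ Ax.fNames ax}
def sigI (K : Set Ax) : Set ℕ := {n | ∃ ax ∈ K, n ∈ Ax.iNames ax}

/-! ### Disjoint unions of interpretations -/

/-- The (generalized) disjoint union `⊎^{i₀} (J i)` of a family of interpretations:
    the family is made mutually disjoint by forming the sigma type, and individual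
    names are interpreted in the component `i₀`. -/
def sigmaUnion {ι : Type} (J : ι → Interp) (i₀ : ι) : Interp where
  Δ := Σ i, (J i).Δ
  nonempty := ⟨⟨i₀, Classical.choice (J i₀).nonempty⟩⟩
  conc := fun a => {x | x.2 ∈ (J x.1).conc a}
  role := fun r => {p | ∃ (i : ι) (x y : (J i).Δ),
    p.1 = ⟨i, x⟩ ∧ p.2 = ⟨i, y⟩ ∧ (x, y) ∈ (J i).role r}
  cprop := fun f => {q | (q.1.2, q.2) ∈ (J q.1.1).cprop f}
  ind := fun a => ⟨i₀, (J i₀).ind a⟩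

/-- `T` enjoys the disjoint model union property: the (generalized) disjoint union of
    any family of mutually disjoint models of `T` is again a model of `T`. -/
def DMUP (T : Set Ax) : Prop :=
  ∀ (ι : Type) (J : ι → Interp) (i₀ : ι),
    (∀ i, (J i).sat T) → (sigmaUnion J i₀).sat T

/-! ### Locality, oracle queries -/

/-- The interpretation obtained from `I` by interpreting every concept, role and
    concrete-property name outside the signature `(SgC, SgR, SgF)` as the empty set. -/
def localize (I : Interp) (SgC SgR SgF : Set ℕ) : Interp where
  Δ := I.Δ
  nonempty := I.nonempty
  conc := fun a => {d | a ∈ SgC ∧ d ∈ I.conc a}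
  role := fun r => {p | r ∈ SgR ∧ p ∈ I.role r}
  cprop := fun f => {p | f ∈ SgF ∧ p ∈ I.cprop f}
  ind := I.ind

/-- `T` is local w.r.t. a signature: every interpretation of the signature extends to
    a model of `T` by emptying all concept/role (and concrete-property) names outside it. -/
def LocalWrt (T : Set Ax) (SgC SgR SgF : Set ℕ) : Prop :=
  ∀ I : Interp, (localize I SgC SgR SgF).sat T

/-- An oracle query `A₁ ⊓ … ⊓ A_m ⊑ A_{m+1} ⊔ … ⊔ Aₙ` (rhs `⊥` when empty). -/
structure OQuery : Type where
  lhs : List ℕ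
  rhs : List ℕ

def Interp.satQ (I : Interp) (q : OQuery) : Prop :=
  {d | ∀ a ∈ q.lhs, d ∈ I.conc a} ⊆ {d | ∃ b ∈ q.rhs, d ∈ I.conc b}

/-- `pos(O)`: the queries over the concept names of `sig(O)` entailed by `O`. -/
def pos (O : Set Ax) : Set OQuery :=
  {q | (∀ a ∈ q.lhs, a ∈ sigC O) ∧ (∀ b ∈ q.rhs, b ∈ sigC O) ∧
     ∀ I : Interp, I.sat O → I.satQ q}

/-- `O` is convex w.r.t. the oracle query language `L_O`. -/
def ConvexPos (O : Set Ax) : Prop :=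
  ∀ q ∈ pos O, ∃ b ∈ q.rhs, (OQuery.mk q.lhs [b]) ∈ pos O

end SROIQPaper

namespace SROIQPaper

/-! ### Auxiliary lemmas -/

lemma Cpt.cNames_finite : ∀ c : Cpt, c.cNames.Finite := by
  intro c
  induction c <;>
    first
      | exact Set.finite_singleton _
      | exact Set.finite_empty
      | assumption
      | exact Set.Finite.union (by assumption) (by assumption)

lemma Ax.cNames_finite : ∀ ax : Ax, ax.cNames.Finite := by
  intro ax
  cases ax <;>
    first
      | exact Set.finite_empty
      | exact Cpt.cNames_finite _
      | exact Set.Finite.union (Cpt.cNames_finite _) (Cpt.cNames_finite _)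

lemma sigC_finite {O : Set Ax} (hO : O.Finite) : (sigC O).Finite := by
  have h : sigC O = ⋃ ax ∈ O, Ax.cNames ax := by
    ext n; simp [sigC]
  rw [h]
  exact hO.biUnion (fun ax _ => Ax.cNames_finite ax)

/-- Embedding of interpretations that preserves the semantics of concepts
    whose signature lies within `(SC, SR, SF, SI)`. -/
structure Emb (I₁ I₂ : Interp) (g : I₁.Δ → I₂.Δ) (SC SR SF SI : Set ℕ) : Prop where
  inj : Function.Injective g
  conc : ∀ a ∈ SC, ∀ e, g e ∈ I₂.conc a ↔ e ∈ I₁.conc a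
  role_iff : ∀ r ∈ SR, ∀ e e', (g e, g e') ∈ I₂.role r ↔ (e, e') ∈ I₁.role r
  role_out : ∀ r ∈ SR, ∀ e y, (g e, y) ∈ I₂.role r → y ∈ Set.range g
  role_in : ∀ r ∈ SR, ∀ e y, (y, g e) ∈ I₂.role r → y ∈ Set.range g
  cprop : ∀ f ∈ SF, ∀ e i, (g e, i) ∈ I₂.cprop f ↔ (e, i) ∈ I₁.cprop f
  ind : ∀ a ∈ SI, I₂.ind a = g (I₁.ind a)

namespace Emb

variable {I₁ I₂ : Interp} {g : I₁.Δ → I₂.Δ} {SC SR SF SI : Set ℕ}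

lemma rsem_iff (H : Emb I₁ I₂ g SC SR SF SI) {r : Rl} (hr : r.base ∈ SR) (e e') :
    (g e, g e') ∈ r.sem I₂ ↔ (e, e') ∈ r.sem I₁ := by
  cases r with
  | name n => exact H.role_iff n hr e e'
  | inv n => exact H.role_iff n hr e' e

lemma rsem_out (H : Emb I₁ I₂ g SC SR SF SI) {r : Rl} (hr : r.base ∈ SR) (e : I₁.Δ)
    (y : I₂.Δ) (h : (g e, y) ∈ r.sem I₂) : y ∈ Set.range g := by
  cases r with
  | name n => exact H.role_out n hr e y h
  | inv n => exact H.role_in n hr e y h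

theorem sem (H : Emb I₁ I₂ g SC SR SF SI) :
    ∀ C : Cpt, C.cNames ⊆ SC → C.rNames ⊆ SR → C.fNames ⊆ SF → C.iNames ⊆ SI →
    ∀ e, g e ∈ C.sem I₂ ↔ e ∈ C.sem I₁ := by
  classical
  intro C
  induction C with
  | atom a =>
      intro hc _ _ _ e
      exact H.conc a (hc rfl) e
  | top => intro _ _ _ _ e; simp [Cpt.sem]
  | bot => intro _ _ _ _ e; simp [Cpt.sem]
  | nom a =>
      intro _ _ _ hi e
      show g e ∈ ({I₂.ind a} : Set _) ↔ e ∈ ({I₁.ind a} : Set _)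
      rw [H.ind a (hi rfl)]
      simp [H.inj.eq_iff]
  | neg c ih =>
      intro hc hr hf hi e
      have := ih hc hr hf hi e
      show g e ∈ (c.sem I₂)ᶜ ↔ e ∈ (c.sem I₁)ᶜ
      simp [this]
  | and c d ihc ihd =>
      intro hc hr hf hi e
      have h1 := ihc (fun x hx => hc (Or.inl hx)) (fun x hx => hr (Or.inl hx))
        (fun x hx => hf (Or.inl hx)) (fun x hx => hi (Or.inl hx)) e
      have h2 := ihd (fun x hx => hc (Or.inr hx)) (fun x hx => hr (Or.inr hx))
        (fun x hx => hf (Or.inr hx)) (fun x hx => hi (Or.inr hx)) e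
      show g e ∈ c.sem I₂ ∩ d.sem I₂ ↔ e ∈ c.sem I₁ ∩ d.sem I₁
      simp [h1, h2]
  | or c d ihc ihd =>
      intro hc hr hf hi e
      have h1 := ihc (fun x hx => hc (Or.inl hx)) (fun x hx => hr (Or.inl hx))
        (fun x hx => hf (Or.inl hx)) (fun x hx => hi (Or.inl hx)) e
      have h2 := ihd (fun x hx => hc (Or.inr hx)) (fun x hx => hr (Or.inr hx))
        (fun x hx => hf (Or.inr hx)) (fun x hx => hi (Or.inr hx)) e
      show g e ∈ c.sem I₂ ∪ d.sem I₂ ↔ e ∈ c.sem I₁ ∪ d.sem I₁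
      simp [h1, h2]
  | ex r c ih =>
      intro hc hr hf hi e
      have hrb : r.base ∈ SR := hr (Or.inl rfl)
      have ihc := ih hc (fun x hx => hr (Or.inr hx)) hf hi
      constructor
      · rintro ⟨y, hy1, hy2⟩
        obtain ⟨e', rfl⟩ := H.rsem_out hrb e y hy1
        exact ⟨e', (H.rsem_iff hrb e e').mp hy1, (ihc e').mp hy2⟩
      · rintro ⟨e', h1, h2⟩
        exact ⟨g e', (H.rsem_iff hrb e e').mpr h1, (ihc e').mpr h2⟩
  | all r c ih =>
      intro hc hr hf hi e
      have hrb : r.base ∈ SR := hr (Or.inl rfl)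
      have ihc := ih hc (fun x hx => hr (Or.inr hx)) hf hi
      constructor
      · intro h e' he'
        exact (ihc e').mp (h (g e') ((H.rsem_iff hrb e e').mpr he'))
      · intro h y hy
        obtain ⟨e', rfl⟩ := H.rsem_out hrb e y hy
        exact (ihc e').mpr (h e' ((H.rsem_iff hrb e e').mp hy))
  | atLeast n r c ih =>
      intro hc hr hf hi e
      have hrb : r.base ∈ SR := hr (Or.inl rfl)
      have ihc := ih hc (fun x hx => hr (Or.inr hx)) hf hi
      show (∃ t : Finset I₂.Δ, n ≤ t.card ∧ ∀ y ∈ t, (g e, y) ∈ r.sem I₂ ∧ y ∈ c.sem I₂) ↔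
        (∃ t : Finset I₁.Δ, n ≤ t.card ∧ ∀ y ∈ t, (e, y) ∈ r.sem I₁ ∧ y ∈ c.sem I₁)
      constructor
      · rintro ⟨t, hn, ht⟩
        have hN : Nonempty I₁.Δ := I₁.nonempty
        refine ⟨t.image (Function.invFun g), ?_, ?_⟩
        · rw [Finset.card_image_of_injOn ?_]
          · exact hn
          intro y₁ h₁ y₂ h₂ hinv
          obtain ⟨e₁, rfl⟩ := H.rsem_out hrb e y₁ (ht y₁ h₁).1
          obtain ⟨e₂, rfl⟩ := H.rsem_out hrb e y₂ (ht y₂ h₂).1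
          rw [Function.leftInverse_invFun H.inj e₁,
            Function.leftInverse_invFun H.inj e₂] at hinv
          rw [hinv]
        · intro e' he'
          simp only [Finset.mem_image] at he'
          obtain ⟨y, hy, hfy⟩ := he'
          obtain ⟨e₁, rfl⟩ := H.rsem_out hrb e y (ht y hy).1
          rw [Function.leftInverse_invFun H.inj e₁] at hfy
          subst hfy
          exact ⟨(H.rsem_iff hrb e _).mp (ht _ hy).1, (ihc _).mp (ht _ hy).2⟩
      · rintro ⟨t, hn, ht⟩
        refine ⟨t.image g, ?_, ?_⟩
        · rw [Finset.card_image_of_injective t H.inj]; exact hn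
        · intro y hy
          simp only [Finset.mem_image] at hy
          obtain ⟨e', he', rfl⟩ := hy
          exact ⟨(H.rsem_iff hrb e e').mpr (ht e' he').1, (ihc e').mpr (ht e' he').2⟩
  | atMost n r c ih =>
      intro hc hr hf hi e
      have hrb : r.base ∈ SR := hr (Or.inl rfl)
      have ihc := ih hc (fun x hx => hr (Or.inr hx)) hf hi
      have hset : {y | (g e, y) ∈ r.sem I₂ ∧ y ∈ c.sem I₂} =
          g '' {e' | (e, e') ∈ r.sem I₁ ∧ e' ∈ c.sem I₁} := by
        ext y
        constructor
        · rintro ⟨h1, h2⟩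
          obtain ⟨e', rfl⟩ := H.rsem_out hrb e y h1
          exact ⟨e', ⟨(H.rsem_iff hrb e e').mp h1, (ihc e').mp h2⟩, rfl⟩
        · rintro ⟨e', ⟨h1, h2⟩, rfl⟩
          exact ⟨(H.rsem_iff hrb e e').mpr h1, (ihc e').mpr h2⟩
      show ({y | (g e, y) ∈ r.sem I₂ ∧ y ∈ c.sem I₂}.Finite ∧
          {y | (g e, y) ∈ r.sem I₂ ∧ y ∈ c.sem I₂}.ncard ≤ n) ↔ _
      rw [hset, Set.ncard_image_of_injective _ H.inj]
      constructor
      · rintro ⟨h1, h2⟩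
        exact ⟨Set.Finite.of_finite_image h1 H.inj.injOn, h2⟩
      · rintro ⟨h1, h2⟩
        exact ⟨h1.image g, h2⟩
  | selfC r =>
      intro _ hr _ _ e
      exact H.rsem_iff (hr rfl) e e
  | ival f l u =>
      intro _ _ hf _ e
      show (∃ i : ℤ, l ≤ i ∧ i ≤ u ∧ (g e, i) ∈ I₂.cprop f) ↔ _
      constructor
      · rintro ⟨i, h1, h2, h3⟩
        exact ⟨i, h1, h2, (H.cprop f (hf rfl) e i).mp h3⟩
      · rintro ⟨i, h1, h2, h3⟩
        exact ⟨i, h1, h2, (H.cprop f (hf rfl) e i).mpr h3⟩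

end Emb

lemma rsem_dead {M : Interp} {z : M.Δ} {r : Rl}
    (h : ∀ y, (z, y) ∉ M.role r.base ∧ (y, z) ∉ M.role r.base) (y : M.Δ) :
    (z, y) ∉ r.sem M ∧ (y, z) ∉ r.sem M := by
  cases r with
  | name n => exact h y
  | inv n => exact ⟨(h y).2, (h y).1⟩

lemma sem_localize (M : Interp) (SC SR SF : Set ℕ) :
    ∀ (C : Cpt) (z : M.Δ),
    (∀ a ∈ C.cNames, a ∉ SC → z ∉ M.conc a) →
    (∀ r ∈ C.rNames, ∀ y, (z, y) ∉ M.role r ∧ (y, z) ∉ M.role r) →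
    (∀ f ∈ C.fNames, ∀ i, (z, i) ∉ M.cprop f) →
    (z ∈ C.sem M ↔ z ∈ C.sem (localize M SC SR SF)) := by
  have hrole : ∀ (r : ℕ) (z : M.Δ), (∀ y, (z, y) ∉ M.role r ∧ (y, z) ∉ M.role r) →
      ∀ y : M.Δ, (z, y) ∉ (localize M SC SR SF).role r ∧
        (y, z) ∉ (localize M SC SR SF).role r := by
    intro r z h y
    exact ⟨fun hm => (h y).1 hm.2, fun hm => (h y).2 hm.2⟩
  intro C
  induction C with
  | atom a =>
      intro z hc _ _
      show z ∈ M.conc a ↔ (a ∈ SC ∧ z ∈ M.conc a)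
      by_cases ha : a ∈ SC
      · simp [ha]
      · simp only [ha, false_and, iff_false]
        exact hc a rfl ha
  | top => intro z _ _ _; exact Iff.rfl
  | bot => intro z _ _ _; exact Iff.rfl
  | nom a => intro z _ _ _; exact Iff.rfl
  | neg c ih =>
      intro z hc hr hf
      exact not_congr (ih z hc hr hf)
  | and c d ihc ihd =>
      intro z hc hr hf
      have h1 := ihc z (fun x hx => hc x (Or.inl hx)) (fun x hx => hr x (Or.inl hx))
        (fun x hx => hf x (Or.inl hx))
      have h2 := ihd z (fun x hx => hc x (Or.inr hx)) (fun x hx => hr x (Or.inr hx))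
        (fun x hx => hf x (Or.inr hx))
      exact and_congr h1 h2
  | or c d ihc ihd =>
      intro z hc hr hf
      have h1 := ihc z (fun x hx => hc x (Or.inl hx)) (fun x hx => hr x (Or.inl hx))
        (fun x hx => hf x (Or.inl hx))
      have h2 := ihd z (fun x hx => hc x (Or.inr hx)) (fun x hx => hr x (Or.inr hx))
        (fun x hx => hf x (Or.inr hx))
      exact or_congr h1 h2
  | ex r c ih =>
      intro z _ hr _
      have d1 := rsem_dead (M := M) (z := z) (r := r) (hr r.base (Or.inl rfl))
      have d2 := rsem_dead (M := localize M SC SR SF) (z := z) (r := r)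
        (hrole r.base z (hr r.base (Or.inl rfl)))
      constructor
      · rintro ⟨y, h1, -⟩; exact absurd h1 (d1 y).1
      · rintro ⟨y, h1, -⟩; exact absurd h1 (d2 y).1
  | all r c ih =>
      intro z _ hr _
      have d1 := rsem_dead (M := M) (z := z) (r := r) (hr r.base (Or.inl rfl))
      have d2 := rsem_dead (M := localize M SC SR SF) (z := z) (r := r)
        (hrole r.base z (hr r.base (Or.inl rfl)))
      apply iff_of_true
      · intro y hy; exact absurd hy (d1 y).1
      · intro y hy; exact absurd hy (d2 y).1
  | atLeast n r c ih =>
      intro z _ hr _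
      have d1 := rsem_dead (M := M) (z := z) (r := r) (hr r.base (Or.inl rfl))
      have d2 := rsem_dead (M := localize M SC SR SF) (z := z) (r := r)
        (hrole r.base z (hr r.base (Or.inl rfl)))
      constructor
      · rintro ⟨t, hn, ht⟩
        exact ⟨t, hn, fun y hy => absurd (ht y hy).1 (d1 y).1⟩
      · rintro ⟨t, hn, ht⟩
        exact ⟨t, hn, fun y hy => absurd (ht y hy).1 (d2 y).1⟩
  | atMost n r c ih =>
      intro z _ hr _
      have d1 := rsem_dead (M := M) (z := z) (r := r) (hr r.base (Or.inl rfl))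
      have d2 := rsem_dead (M := localize M SC SR SF) (z := z) (r := r)
        (hrole r.base z (hr r.base (Or.inl rfl)))
      have e1 : {y | (z, y) ∈ r.sem M ∧ y ∈ c.sem M} = ∅ := by
        ext y
        simp only [Set.mem_setOf_eq, Set.mem_empty_iff_false, iff_false, not_and]
        intro h1; exact absurd h1 (d1 y).1
      have e2 : {y | (z, y) ∈ r.sem (localize M SC SR SF) ∧
          y ∈ c.sem (localize M SC SR SF)} = ∅ := by
        ext y
        simp only [Set.mem_setOf_eq, Set.mem_empty_iff_false, iff_false, not_and]
        intro h1; exact absurd h1 (d2 y).1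
      apply iff_of_true
      · show _ ∧ _
        rw [e1]; simp
      · show _ ∧ _
        exact ⟨(congrArg Set.Finite e2).mpr Set.finite_empty,
          (congrArg (fun s => Set.ncard s ≤ n) e2).mpr (by simp)⟩
  | selfC r =>
      intro z _ hr _
      have d1 := rsem_dead (M := M) (z := z) (r := r) (hr r.base rfl)
      have d2 := rsem_dead (M := localize M SC SR SF) (z := z) (r := r)
        (hrole r.base z (hr r.base rfl))
      apply iff_of_false
      · exact (d1 z).1
      · exact (d2 z).1
  | ival f l u =>
      intro z _ _ hf
      apply iff_of_false
      · rintro ⟨i, -, -, h⟩; exact hf f rfl i h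
      · rintro ⟨i, -, -, h⟩; exact hf f rfl i h.2

lemma emb_sigma {ι : Type} (J : ι → Interp) (i₀ : ι) :
    Emb (J i₀) (sigmaUnion J i₀) (fun x => ⟨i₀, x⟩) Set.univ Set.univ Set.univ Set.univ where
  inj := fun a b h => eq_of_heq (Sigma.mk.inj_iff.mp h).2
  conc := fun _ _ _ => Iff.rfl
  role_iff := fun r _ e e' => by
    constructor
    · rintro ⟨i, x, y, hx, hy, hr⟩
      obtain ⟨rfl, hx2⟩ := Sigma.mk.inj_iff.mp hx
      obtain ⟨-, hy2⟩ := Sigma.mk.inj_iff.mp hy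
      rw [eq_of_heq hx2, eq_of_heq hy2]
      exact hr
    · intro h
      exact ⟨i₀, e, e', rfl, rfl, h⟩
  role_out := fun r _ e y hy => by
    obtain ⟨i, x, y', hx, hy', hr⟩ := hy
    obtain ⟨rfl, -⟩ := Sigma.mk.inj_iff.mp hx
    exact ⟨y', hy'.symm⟩
  role_in := fun r _ e y hy => by
    obtain ⟨i, x, y', hx, hy', hr⟩ := hy
    obtain ⟨rfl, -⟩ := Sigma.mk.inj_iff.mp hy'
    exact ⟨x, hx.symm⟩
  cprop := fun _ _ _ _ => Iff.rfl
  ind := fun _ _ => rfl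

lemma sigmaUnion_sat {ι : Type} (J : ι → Interp) (i₀ : ι) (O : Set Ax)
    (h2 : DMUP (termPart O)) (hJ : ∀ i, (J i).sat O) : (sigmaUnion J i₀).sat O := by
  have hterm : (sigmaUnion J i₀).sat (termPart O) :=
    h2 ι J i₀ (fun i ax hax => hJ i ax hax.1)
  intro ax hax
  have E := emb_sigma J i₀
  cases ax with
  | gci c d => exact hterm _ ⟨hax, trivial⟩
  | rdisj r s => exact hterm _ ⟨hax, trivial⟩
  | rincl rs r => exact hterm _ ⟨hax, trivial⟩
  | cassert c a =>
      exact (E.sem c (Set.subset_univ _) (Set.subset_univ _) (Set.subset_univ _)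
        (Set.subset_univ _) ((J i₀).ind a)).mpr (hJ i₀ _ hax)
  | rassert r a b =>
      exact (E.rsem_iff trivial ((J i₀).ind a) ((J i₀).ind b)).mpr (hJ i₀ _ hax)

/-- The amalgam of `I` and `U` along `g`: symbols in `(SC, SR, SF, SI)` are
    interpreted as in `U`, the others as the `g`-image of their
    interpretation in `I`. -/
noncomputable def amalgam (I U : Interp) (g : I.Δ → U.Δ) (SC SR SF SI : Set ℕ) : Interp where
  Δ := U.Δ
  nonempty := U.nonempty
  conc := fun a => {z | (a ∈ SC ∧ z ∈ U.conc a) ∨ (a ∉ SC ∧ ∃ e, z = g e ∧ e ∈ I.conc a)}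
  role := fun r => {p | (r ∈ SR ∧ p ∈ U.role r) ∨
    (r ∉ SR ∧ ∃ e e', p = (g e, g e') ∧ (e, e') ∈ I.role r)}
  cprop := fun f => {p | (f ∈ SF ∧ p ∈ U.cprop f) ∨
    (f ∉ SF ∧ ∃ e, p = (g e, p.2) ∧ (e, p.2) ∈ I.cprop f)}
  ind := fun a => by classical exact if a ∈ SI then U.ind a else g (I.ind a)

section Amalgam

variable {I U : Interp} {g : I.Δ → U.Δ} {SC SR SF SI : Set ℕ}

lemma amalgam_conc_mem {a : ℕ} {z : U.Δ} :
    z ∈ (amalgam I U g SC SR SF SI).conc a ↔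
      (a ∈ SC ∧ z ∈ U.conc a) ∨ (a ∉ SC ∧ ∃ e, z = g e ∧ e ∈ I.conc a) := Iff.rfl

lemma amalgam_role_mem {r : ℕ} {p : U.Δ × U.Δ} :
    p ∈ (amalgam I U g SC SR SF SI).role r ↔
      (r ∈ SR ∧ p ∈ U.role r) ∨ (r ∉ SR ∧ ∃ e e', p = (g e, g e') ∧ (e, e') ∈ I.role r) :=
  Iff.rfl

lemma amalgam_cprop_mem {f : ℕ} {p : U.Δ × ℤ} :
    p ∈ (amalgam I U g SC SR SF SI).cprop f ↔
      (f ∈ SF ∧ p ∈ U.cprop f) ∨ (f ∉ SF ∧ ∃ e, p = (g e, p.2) ∧ (e, p.2) ∈ I.cprop f) :=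
  Iff.rfl

lemma amalgam_ind_mem {a : ℕ} (ha : a ∈ SI) :
    (amalgam I U g SC SR SF SI).ind a = U.ind a := by
  simp [amalgam, ha]

lemma amalgam_ind_not_mem {a : ℕ} (ha : a ∉ SI) :
    (amalgam I U g SC SR SF SI).ind a = g (I.ind a) := by
  simp [amalgam, ha]

lemma emb_amalgam (hg : Function.Injective g)
    (hconc : ∀ a ∈ SC, ∀ e, g e ∈ U.conc a ↔ e ∈ I.conc a) :
    Emb I (amalgam I U g SC SR SF SI) g Set.univ SRᶜ SFᶜ SIᶜ where
  inj := hg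
  conc := fun a _ e => by
    refine amalgam_conc_mem.trans ?_
    by_cases ha : a ∈ SC
    · simp only [ha, true_and, not_true_eq_false, false_and, or_false]
      exact hconc a ha e
    · simp only [ha, false_and, false_or, not_false_eq_true, true_and, hg.eq_iff]
      constructor
      · rintro ⟨e', rfl, h⟩; exact h
      · intro h; exact ⟨e, rfl, h⟩
  role_iff := fun r hr e e' => by
    have hr' : r ∉ SR := hr
    refine amalgam_role_mem.trans ?_
    simp only [hr', false_and, false_or, not_false_eq_true, true_and, Prod.mk.injEq,
      hg.eq_iff]
    constructor
    · rintro ⟨a, b, hab, h⟩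
      obtain rfl := hg ((Prod.mk.injEq _ _ _ _).mp hab).1
      obtain rfl := hg ((Prod.mk.injEq _ _ _ _).mp hab).2
      exact h
    · intro h; exact ⟨e, e', rfl, h⟩
  role_out := fun r hr e y hy => by
    have hr' : r ∉ SR := hr
    rcases amalgam_role_mem.mp hy with ⟨h, -⟩ | ⟨-, a, b, hab, -⟩
    · exact absurd h hr'
    · exact ⟨b, ((Prod.mk.injEq _ _ _ _).mp hab).2.symm⟩
  role_in := fun r hr e y hy => by
    have hr' : r ∉ SR := hr
    rcases amalgam_role_mem.mp hy with ⟨h, -⟩ | ⟨-, a, b, hab, -⟩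
    · exact absurd h hr'
    · exact ⟨a, ((Prod.mk.injEq _ _ _ _).mp hab).1.symm⟩
  cprop := fun f hf e i => by
    have hf' : f ∉ SF := hf
    refine amalgam_cprop_mem.trans ?_
    simp only [hf', false_and, false_or, not_false_eq_true, true_and, Prod.mk.injEq,
      hg.eq_iff, and_true]
    constructor
    · rintro ⟨e', hee, h⟩
      obtain rfl := hg ((Prod.mk.injEq _ _ _ _).mp hee).1
      exact h
    · intro h; exact ⟨e, rfl, h⟩
  ind := fun a ha => amalgam_ind_not_mem ha

lemma emb_id_amalgam :
    Emb U (amalgam I U g SC SR SF SI) id SC SR SF SI where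
  inj := fun _ _ h => h
  conc := fun a ha e => by refine amalgam_conc_mem.trans ?_; simp [ha]
  role_iff := fun r hr e e' => by refine amalgam_role_mem.trans ?_; simp [hr]; exact Iff.rfl
  role_out := fun r hr e y _ => ⟨y, rfl⟩
  role_in := fun r hr e y _ => ⟨y, rfl⟩
  cprop := fun f hf e i => by refine amalgam_cprop_mem.trans ?_; simp [hf]; exact Iff.rfl
  ind := fun a ha => amalgam_ind_mem ha

lemma amalgam_role_eq {r : ℕ} (hr : r ∈ SR) :
    (amalgam I U g SC SR SF SI).role r = U.role r := by
  ext p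
  refine amalgam_role_mem.trans ?_
  simp [hr]
  exact Iff.rfl

lemma amalgam_rsem_eq {r : Rl} (hr : r.base ∈ SR) :
    Rl.sem (amalgam I U g SC SR SF SI) r = Rl.sem U r := by
  cases r with
  | name n => exact amalgam_role_eq hr
  | inv n =>
      ext p
      show (p.2, p.1) ∈ (amalgam I U g SC SR SF SI).role n ↔ (p.2, p.1) ∈ U.role n
      exact Set.ext_iff.mp (amalgam_role_eq (r := n) (hr : n ∈ SR)) (p.2, p.1)

lemma amalgam_rsem_img (hg : Function.Injective g) {r : Rl} (hr : r.base ∉ SR) :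
    ∀ p ∈ Rl.sem (amalgam I U g SC SR SF SI) r,
      ∃ e e', p = (g e, g e') ∧ (e, e') ∈ Rl.sem I r := by
  intro p hp
  cases r with
  | name n =>
      rcases amalgam_role_mem.mp hp with ⟨h, -⟩ | ⟨-, e, e', hee, h⟩
      · exact absurd h hr
      · exact ⟨e, e', hee, h⟩
  | inv n =>
      have hp' : (p.2, p.1) ∈ (amalgam I U g SC SR SF SI).role n := hp
      rcases amalgam_role_mem.mp hp' with ⟨h, -⟩ | ⟨-, e, e', hee, h⟩
      · exact absurd h hr
      · refine ⟨e', e, ?_, h⟩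
        have h1 := ((Prod.mk.injEq _ _ _ _).mp hee).1
        have h2 := ((Prod.mk.injEq _ _ _ _).mp hee).2
        exact Prod.ext h2 h1

lemma amalgam_rsem_img_iff (hg : Function.Injective g) {r : Rl} (hr : r.base ∉ SR)
    (e e' : I.Δ) :
    (g e, g e') ∈ Rl.sem (amalgam I U g SC SR SF SI) r ↔ (e, e') ∈ Rl.sem I r := by
  constructor
  · intro h
    obtain ⟨a, b, hab, h2⟩ := amalgam_rsem_img hg hr _ h
    have ha : e = a := hg ((Prod.mk.injEq _ _ _ _).mp hab).1
    have hb : e' = b := hg ((Prod.mk.injEq _ _ _ _).mp hab).2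
    rw [ha, hb]
    exact h2
  · intro h
    cases r with
    | name n => exact amalgam_role_mem.mpr (Or.inr ⟨hr, e, e', rfl, h⟩)
    | inv n =>
        show (g e', g e) ∈ (amalgam I U g SC SR SF SI).role n
        exact amalgam_role_mem.mpr (Or.inr ⟨hr, e', e, rfl, h⟩)

lemma amalgam_chain_eq {rs : List Rl} (hrs : ∀ s ∈ rs, Rl.base s ∈ SR) :
    chain (amalgam I U g SC SR SF SI) rs = chain U rs := by
  induction rs with
  | nil => rfl
  | cons r rest ih =>
      ext p
      show (∃ z, (p.1, z) ∈ r.sem (amalgam I U g SC SR SF SI) ∧ _) ↔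
        (∃ z, (p.1, z) ∈ r.sem U ∧ _)
      rw [amalgam_rsem_eq (hrs r (List.mem_cons_self)),
        ih (fun s hs => hrs s (List.mem_cons_of_mem r hs))]
      rfl

lemma amalgam_chain_pullback (hg : Function.Injective g) {rs : List Rl}
    (hrs : ∀ s ∈ rs, Rl.base s ∉ SR) :
    ∀ e w, ((g e : U.Δ), w) ∈ chain (amalgam I U g SC SR SF SI) rs →
      ∃ e', w = g e' ∧ (e, e') ∈ chain I rs := by
  induction rs with
  | nil =>
      intro e w hw
      exact ⟨e, (hw : g e = w).symm, rfl⟩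
  | cons r rest ih =>
      rintro e w ⟨z, h1, h2⟩
      obtain ⟨a, b, hab, h3⟩ := amalgam_rsem_img hg (hrs r (List.mem_cons_self)) _ h1
      have ha : e = a := hg ((Prod.mk.injEq _ _ _ _).mp hab).1
      have hz : z = g b := ((Prod.mk.injEq _ _ _ _).mp hab).2
      subst hz
      obtain ⟨e', hw, hch⟩ := ih (fun s hs => hrs s (List.mem_cons_of_mem r hs)) b w h2
      exact ⟨e', hw, b, ha ▸ h3, hch⟩

end Amalgam

lemma amalgam_sat_right {I U : Interp} {g : I.Δ → U.Δ} {SC SR SF SI : Set ℕ}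
    {O : Set Ax} (hU : U.sat O)
    (hCs : ∀ ax ∈ O, Ax.cNames ax ⊆ SC) (hRs : ∀ ax ∈ O, Ax.rNames ax ⊆ SR)
    (hFs : ∀ ax ∈ O, Ax.fNames ax ⊆ SF) (hIs : ∀ ax ∈ O, Ax.iNames ax ⊆ SI) :
    (amalgam I U g SC SR SF SI).sat O := by
  intro ax hax
  have E : Emb U (amalgam I U g SC SR SF SI) id SC SR SF SI := emb_id_amalgam
  cases ax with
  | gci c c' =>
      intro z hz
      exact (E.sem c' (fun x hx => hCs _ hax (Or.inr hx)) (fun x hx => hRs _ hax (Or.inr hx))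
        (fun x hx => hFs _ hax (Or.inr hx)) (fun x hx => hIs _ hax (Or.inr hx)) z).mpr
        (hU _ hax ((E.sem c (fun x hx => hCs _ hax (Or.inl hx)) (fun x hx => hRs _ hax (Or.inl hx))
          (fun x hx => hFs _ hax (Or.inl hx)) (fun x hx => hIs _ hax (Or.inl hx)) z).mp hz))
  | rdisj r s =>
      show Rl.sem _ r ∩ Rl.sem _ s = ∅
      rw [amalgam_rsem_eq (hRs _ hax (Or.inl rfl)), amalgam_rsem_eq (hRs _ hax (Or.inr rfl))]
      exact hU _ hax
  | rincl rs r =>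
      show chain _ rs ⊆ Rl.sem _ r
      rw [amalgam_chain_eq (fun s hs => hRs _ hax (Or.inr ⟨s, hs, rfl⟩)),
        amalgam_rsem_eq (hRs _ hax (Or.inl rfl))]
      exact hU _ hax
  | cassert c a =>
      show (amalgam I U g SC SR SF SI).ind a ∈ c.sem _
      rw [amalgam_ind_mem (hIs _ hax (Or.inl rfl))]
      exact (E.sem c (fun x hx => hCs _ hax hx) (fun x hx => hRs _ hax hx)
        (fun x hx => hFs _ hax hx) (fun x hx => hIs _ hax (Or.inr hx)) (U.ind a)).mpr
        (hU _ hax)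
  | rassert r a b =>
      show ((amalgam I U g SC SR SF SI).ind a, (amalgam I U g SC SR SF SI).ind b) ∈
        Rl.sem _ r
      rw [amalgam_ind_mem (hIs _ hax (Or.inl rfl)), amalgam_ind_mem (hIs _ hax (Or.inr rfl))]
      exact (E.rsem_iff (hRs _ hax rfl) (U.ind a) (U.ind b)).mpr (hU _ hax)

/-- let `K` and `O` be knowledge bases and `α = (Cα ⊑ Dα)` a GCI such
    that (1) `K` and `α` are in SROIQ(D) without the universal role, with the
    concrete domain of integer intervals (built into the syntax used here);
    (2) the terminological part of `O` enjoys the disjoint model union property;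
    (3) the terminological part of `K` is local w.r.t. `sig(O)`; and
    (4) `(sig(K) ∪ sig(α)) ∩ sig(O)` contains only concept names.
    Then `K ∪ O ⊨ α` iff `K ∪ pos(O) ⊨ α`. -/
theorem statement_6 (K O : Set Ax) (hK : K.Finite) (hO : O.Finite)
    (Cα Dα : Cpt)
    (hNoIndO : ∀ ax ∈ termPart O, Ax.iNames ax = ∅)
    (h2 : DMUP (termPart O))
    (h3 : LocalWrt (termPart K) (sigC O) (sigR O) (sigF O))
    (h4R : (sigR K ∪ Cα.rNames ∪ Dα.rNames) ∩ sigR O = ∅)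
    (h4F : (sigF K ∪ Cα.fNames ∪ Dα.fNames) ∩ sigF O = ∅)
    (h4I : (sigI K ∪ Cα.iNames ∪ Dα.iNames) ∩ sigI O = ∅) :
    ((∀ I : Interp, I.sat K → I.sat O → Cpt.sem I Cα ⊆ Cpt.sem I Dα) ↔
      (∀ I : Interp, I.sat K → (∀ q ∈ pos O, I.satQ q) → Cpt.sem I Cα ⊆ Cpt.sem I Dα)) := by
  classical
  have hdR : ∀ n ∈ sigR K ∪ Cα.rNames ∪ Dα.rNames, n ∉ sigR O := by
    intro n hn hnO
    have : n ∈ (sigR K ∪ Cα.rNames ∪ Dα.rNames) ∩ sigR O := ⟨hn, hnO⟩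
    rw [h4R] at this
    exact this
  have hdF : ∀ n ∈ sigF K ∪ Cα.fNames ∪ Dα.fNames, n ∉ sigF O := by
    intro n hn hnO
    have : n ∈ (sigF K ∪ Cα.fNames ∪ Dα.fNames) ∩ sigF O := ⟨hn, hnO⟩
    rw [h4F] at this
    exact this
  have hdI : ∀ n ∈ sigI K ∪ Cα.iNames ∪ Dα.iNames, n ∉ sigI O := by
    intro n hn hnO
    have : n ∈ (sigI K ∪ Cα.iNames ∪ Dα.iNames) ∩ sigI O := ⟨hn, hnO⟩
    rw [h4I] at this
    exact this
  constructor
  · -- hard direction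
    intro hL Iv hIK hIQ d hd
    by_contra hnd
    have hSfin : (sigC O).Finite := sigC_finite hO
    -- for every element of Iv, a model of O realizing its concept-name type
    have key : ∀ e : Iv.Δ, ∃ (Jm : Interp) (x : Jm.Δ), Jm.sat O ∧
        ∀ a ∈ sigC O, (x ∈ Jm.conc a ↔ e ∈ Iv.conc a) := by
      intro e
      have hql : ∀ a, a ∈ (hSfin.toFinset.filter fun a => e ∈ Iv.conc a).toList ↔
          (a ∈ sigC O ∧ e ∈ Iv.conc a) := by
        intro a
        simp [Finset.mem_filter, hSfin.mem_toFinset]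
      have hqr : ∀ a, a ∈ (hSfin.toFinset.filter fun a => e ∉ Iv.conc a).toList ↔
          (a ∈ sigC O ∧ e ∉ Iv.conc a) := by
        intro a
        simp [Finset.mem_filter, hSfin.mem_toFinset]
      have hq : (⟨(hSfin.toFinset.filter fun a => e ∈ Iv.conc a).toList,
          (hSfin.toFinset.filter fun a => e ∉ Iv.conc a).toList⟩ : OQuery) ∉ pos O := by
        intro hmem
        have hs := hIQ _ hmem
        have he : e ∈ {d | ∀ a ∈ (hSfin.toFinset.filter fun a => e ∈ Iv.conc a).toList,
            d ∈ Iv.conc a} := fun a ha => ((hql a).mp ha).2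
        obtain ⟨b, hb, hbe⟩ := hs he
        exact ((hqr b).mp hb).2 hbe
      simp only [pos, Set.mem_setOf_eq] at hq
      push_neg at hq
      obtain ⟨Jm, hJm, hviol⟩ :=
        hq (fun a ha => ((hql a).mp ha).1) (fun b hb => ((hqr b).mp hb).1)
      simp only [Interp.satQ] at hviol
      rw [Set.not_subset] at hviol
      obtain ⟨x, hx1, hx2⟩ := hviol
      refine ⟨Jm, x, hJm, ?_⟩
      intro a haO
      by_cases hea : e ∈ Iv.conc a
      · exact iff_of_true (hx1 a ((hql a).mpr ⟨haO, hea⟩)) hea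
      · exact iff_of_false (fun hxa => hx2 ⟨a, (hqr a).mpr ⟨haO, hea⟩, hxa⟩) hea
    choose Jf xf hJf hxf using key
    have hU : (sigmaUnion Jf d).sat O := sigmaUnion_sat Jf d O h2 hJf
    have hg : Function.Injective (fun e => (⟨e, xf e⟩ : (sigmaUnion Jf d).Δ)) :=
      fun a b hab => congrArg Sigma.fst hab
    have hgc : ∀ a ∈ sigC O, ∀ e,
        (fun e => (⟨e, xf e⟩ : (sigmaUnion Jf d).Δ)) e ∈ (sigmaUnion Jf d).conc a ↔
          e ∈ Iv.conc a :=
      fun a ha e => hxf e a ha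
    have E2 : Emb Iv (amalgam Iv (sigmaUnion Jf d)
        (fun e => (⟨e, xf e⟩ : (sigmaUnion Jf d).Δ)) (sigC O) (sigR O) (sigF O) (sigI O))
        (fun e => (⟨e, xf e⟩ : (sigmaUnion Jf d).Δ))
        Set.univ (sigR O)ᶜ (sigF O)ᶜ (sigI O)ᶜ := emb_amalgam hg hgc
    have hMO : (amalgam Iv (sigmaUnion Jf d)
        (fun e => (⟨e, xf e⟩ : (sigmaUnion Jf d).Δ)) (sigC O) (sigR O) (sigF O) (sigI O)).sat O :=
      amalgam_sat_right hU (fun ax hax n hn => ⟨ax, hax, hn⟩) (fun ax hax n hn => ⟨ax, hax, hn⟩)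
        (fun ax hax n hn => ⟨ax, hax, hn⟩) (fun ax hax n hn => ⟨ax, hax, hn⟩)
    have hMK : (amalgam Iv (sigmaUnion Jf d)
        (fun e => (⟨e, xf e⟩ : (sigmaUnion Jf d).Δ)) (sigC O) (sigR O) (sigF O) (sigI O)).sat K := by
      intro ax hax
      cases ax with
      | gci c c' =>
          have hrc : c.rNames ⊆ (sigR O)ᶜ :=
            fun n hn => hdR n (Or.inl (Or.inl ⟨_, hax, Or.inl hn⟩))
          have hrc' : c'.rNames ⊆ (sigR O)ᶜ :=
            fun n hn => hdR n (Or.inl (Or.inl ⟨_, hax, Or.inr hn⟩))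
          have hfc : c.fNames ⊆ (sigF O)ᶜ :=
            fun n hn => hdF n (Or.inl (Or.inl ⟨_, hax, Or.inl hn⟩))
          have hfc' : c'.fNames ⊆ (sigF O)ᶜ :=
            fun n hn => hdF n (Or.inl (Or.inl ⟨_, hax, Or.inr hn⟩))
          have hic : c.iNames ⊆ (sigI O)ᶜ :=
            fun n hn => hdI n (Or.inl (Or.inl ⟨_, hax, Or.inl hn⟩))
          have hic' : c'.iNames ⊆ (sigI O)ᶜ :=
            fun n hn => hdI n (Or.inl (Or.inl ⟨_, hax, Or.inr hn⟩))
          intro z hz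
          by_cases hzr : z ∈ Set.range (fun e => (⟨e, xf e⟩ : (sigmaUnion Jf d).Δ))
          · obtain ⟨e, rfl⟩ := hzr
            exact (E2.sem c' (Set.subset_univ _) hrc' hfc' hic' e).mpr
              (hIK _ hax ((E2.sem c (Set.subset_univ _) hrc hfc hic e).mp hz))
          · have hdead : ∀ (cc : Cpt), cc.rNames ⊆ (sigR O)ᶜ → cc.fNames ⊆ (sigF O)ᶜ →
                (z ∈ cc.sem (amalgam Iv (sigmaUnion Jf d)
                  (fun e => (⟨e, xf e⟩ : (sigmaUnion Jf d).Δ))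
                  (sigC O) (sigR O) (sigF O) (sigI O)) ↔
                 z ∈ cc.sem (localize (amalgam Iv (sigmaUnion Jf d)
                  (fun e => (⟨e, xf e⟩ : (sigmaUnion Jf d).Δ))
                  (sigC O) (sigR O) (sigF O) (sigI O)) (sigC O) (sigR O) (sigF O))) := by
              intro cc h1 h2
              apply sem_localize
              · intro a _ haC hzc
                rcases amalgam_conc_mem.mp hzc with ⟨h, -⟩ | ⟨-, e, he, -⟩
                · exact haC h
                · exact hzr ⟨e, he.symm⟩
              · intro r hrn y
                constructor
                · intro hzy
                  rcases amalgam_role_mem.mp hzy with ⟨h, -⟩ | ⟨-, e, e', hee, -⟩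
                  · exact h1 hrn h
                  · exact hzr ⟨e, (((Prod.mk.injEq _ _ _ _).mp hee).1).symm⟩
                · intro hyz
                  rcases amalgam_role_mem.mp hyz with ⟨h, -⟩ | ⟨-, e, e', hee, -⟩
                  · exact h1 hrn h
                  · exact hzr ⟨e', (((Prod.mk.injEq _ _ _ _).mp hee).2).symm⟩
              · intro f hfn i hzi
                rcases amalgam_cprop_mem.mp hzi with ⟨h, -⟩ | ⟨-, e, he, -⟩
                · exact h2 hfn h
                · exact hzr ⟨e, (((Prod.mk.injEq _ _ _ _).mp he).1).symm⟩
            have hzc := (hdead c hrc hfc).mp hz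
            have hloc := h3 (amalgam Iv (sigmaUnion Jf d)
              (fun e => (⟨e, xf e⟩ : (sigmaUnion Jf d).Δ))
              (sigC O) (sigR O) (sigF O) (sigI O)) _ ⟨hax, trivial⟩
            exact (hdead c' hrc' hfc').mpr (hloc hzc)
      | rdisj r s =>
          have hrb : r.base ∉ sigR O := hdR _ (Or.inl (Or.inl ⟨_, hax, Or.inl rfl⟩))
          have hsb : s.base ∉ sigR O := hdR _ (Or.inl (Or.inl ⟨_, hax, Or.inr rfl⟩))
          show Rl.sem _ r ∩ Rl.sem _ s = ∅
          ext p
          simp only [Set.mem_inter_iff, Set.mem_empty_iff_false, iff_false, not_and]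
          intro h1 h2
          obtain ⟨e, e', hee, hr1⟩ := amalgam_rsem_img hg hrb p h1
          obtain ⟨a, b, hab, hs1⟩ := amalgam_rsem_img hg hsb p h2
          rw [hee] at hab
          have hea : e = a := hg ((Prod.mk.injEq _ _ _ _).mp hab).1
          have heb : e' = b := hg ((Prod.mk.injEq _ _ _ _).mp hab).2
          have h5 : (e, e') ∈ Rl.sem Iv r ∩ Rl.sem Iv s :=
            ⟨hr1, by rw [← hea, ← heb] at hs1; exact hs1⟩
          have hdisj : Rl.sem Iv r ∩ Rl.sem Iv s = ∅ := hIK _ hax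
          rw [hdisj] at h5
          exact h5
      | rincl rs r =>
          have hrK : r.base ∈ sigR K := ⟨_, hax, Or.inl rfl⟩
          cases rs with
          | nil =>
              exfalso
              have hloc := h3 Iv _ ⟨hax, trivial⟩
              obtain ⟨z⟩ := Iv.nonempty
              have hzz : ((z, z) : (localize Iv (sigC O) (sigR O) (sigF O)).Δ ×
                  (localize Iv (sigC O) (sigR O) (sigF O)).Δ) ∈
                  chain (localize Iv (sigC O) (sigR O) (sigF O)) [] := rfl
              have hmem := hloc hzz
              have hbase : r.base ∈ sigR O := by
                cases r with
                | name n => exact hmem.1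
                | inv n => exact hmem.1
              exact hdR _ (Or.inl (Or.inl hrK)) hbase
          | cons s rest =>
              intro p hp
              obtain ⟨zz, h1, h2⟩ := hp
              have hsb : s.base ∉ sigR O :=
                hdR _ (Or.inl (Or.inl ⟨_, hax, Or.inr ⟨s, List.mem_cons_self, rfl⟩⟩))
              obtain ⟨e, e₁, hee, h3'⟩ := amalgam_rsem_img hg hsb _ h1
              have hp1 : p.1 = (⟨e, xf e⟩ : (sigmaUnion Jf d).Δ) :=
                ((Prod.mk.injEq _ _ _ _).mp hee).1
              have hz : zz = (⟨e₁, xf e₁⟩ : (sigmaUnion Jf d).Δ) :=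
                ((Prod.mk.injEq _ _ _ _).mp hee).2
              subst hz
              have hrest : ∀ t ∈ rest, Rl.base t ∉ sigR O := fun t ht =>
                hdR _ (Or.inl (Or.inl ⟨_, hax, Or.inr ⟨t, List.mem_cons_of_mem s ht, rfl⟩⟩))
              obtain ⟨e', hw, hch⟩ := amalgam_chain_pullback hg hrest e₁ p.2 h2
              have hchain : (e, e') ∈ chain Iv (s :: rest) := ⟨e₁, h3', hch⟩
              have hIr := hIK _ hax hchain
              have hfin : ((⟨e, xf e⟩ : (sigmaUnion Jf d).Δ), (⟨e', xf e'⟩ : (sigmaUnion Jf d).Δ)) ∈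
                  Rl.sem (amalgam Iv (sigmaUnion Jf d)
                    (fun e => (⟨e, xf e⟩ : (sigmaUnion Jf d).Δ))
                    (sigC O) (sigR O) (sigF O) (sigI O)) r :=
                (amalgam_rsem_img_iff hg (hdR _ (Or.inl (Or.inl hrK))) e e').mpr hIr
              rw [show p = ((⟨e, xf e⟩ : (sigmaUnion Jf d).Δ), (⟨e', xf e'⟩ : (sigmaUnion Jf d).Δ))
                from Prod.ext hp1 hw]
              exact hfin
      | cassert c a =>
          have hanO : a ∉ sigI O := hdI _ (Or.inl (Or.inl ⟨_, hax, Or.inl rfl⟩))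
          show (amalgam Iv (sigmaUnion Jf d)
            (fun e => (⟨e, xf e⟩ : (sigmaUnion Jf d).Δ))
            (sigC O) (sigR O) (sigF O) (sigI O)).ind a ∈ c.sem _
          erw [amalgam_ind_not_mem hanO]
          exact (E2.sem c (Set.subset_univ _)
            (fun n hn => hdR n (Or.inl (Or.inl ⟨_, hax, hn⟩)))
            (fun n hn => hdF n (Or.inl (Or.inl ⟨_, hax, hn⟩)))
            (fun n hn => hdI n (Or.inl (Or.inl ⟨_, hax, Or.inr hn⟩)))
            (Iv.ind a)).mpr (hIK _ hax)
      | rassert r a b =>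
          have hanO : a ∉ sigI O := hdI _ (Or.inl (Or.inl ⟨_, hax, Or.inl rfl⟩))
          have hbnO : b ∉ sigI O := hdI _ (Or.inl (Or.inl ⟨_, hax, Or.inr rfl⟩))
          show ((amalgam Iv (sigmaUnion Jf d)
              (fun e => (⟨e, xf e⟩ : (sigmaUnion Jf d).Δ))
              (sigC O) (sigR O) (sigF O) (sigI O)).ind a,
            (amalgam Iv (sigmaUnion Jf d)
              (fun e => (⟨e, xf e⟩ : (sigmaUnion Jf d).Δ))
              (sigC O) (sigR O) (sigF O) (sigI O)).ind b) ∈ Rl.sem _ r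
          erw [amalgam_ind_not_mem hanO, amalgam_ind_not_mem hbnO]
          exact (E2.rsem_iff (hdR _ (Or.inl (Or.inl ⟨_, hax, rfl⟩))) (Iv.ind a) (Iv.ind b)).mpr
            (hIK _ hax)
    have hsub := hL _ hMK hMO
    have h1 : (⟨d, xf d⟩ : (sigmaUnion Jf d).Δ) ∈ Cα.sem (amalgam Iv (sigmaUnion Jf d)
        (fun e => (⟨e, xf e⟩ : (sigmaUnion Jf d).Δ)) (sigC O) (sigR O) (sigF O) (sigI O)) :=
      (E2.sem Cα (Set.subset_univ _)
        (fun n hn => hdR n (Or.inl (Or.inr hn)))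
        (fun n hn => hdF n (Or.inl (Or.inr hn)))
        (fun n hn => hdI n (Or.inl (Or.inr hn))) d).mpr hd
    exact hnd ((E2.sem Dα (Set.subset_univ _)
        (fun n hn => hdR n (Or.inr hn))
        (fun n hn => hdF n (Or.inr hn))
        (fun n hn => hdI n (Or.inr hn)) d).mp (hsub h1))
  · -- easy direction
    intro hR Iv hIK hIO
    exact hR Iv hIK (fun q hq => hq.2.2 Iv hIO)

end SROIQPaper
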